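/- Let ξ, N0, γ, δ, d_b, d_z, c, h_b, h_z, h_m, β, Z* be positive reals. Viewing β_z^{c1}(σ) = ((d_b + cσZ*/h_m)(γ+δ)/(ξN0) − β/h_b)·(h_m h_z d_z)/(σZ*) as a function of σ > 0, its derivative with respect to σ equals (h_m h_z d_z)/(h_b σ² Z*) · ((γ+δ) h_b d_b/(ξ N0)) · (R0^out − 1), where R0^out = (ξ N0 β)/(d_b(γ+δ) h_b). Consequently β_z^{c1} is strictly decreasing in σ if R0^out < 1 and strictly increasing in σ if R0^out > 1. -/

import Mathlib

/-- The derivative of `β_z^{c1}` with respect to the association rate `σ`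
equals `(h_m h_z d_z)/(h_b σ² Z*)·((γ+δ)h_b d_b/(ξ N0))·(R0^out − 1)`; hence
`β_z^{c1}` is strictly decreasing in `σ` when `R0^out < 1` and strictly
increasing when `R0^out > 1`. -/
theorem critical_betaz_monotone_in_sigma
    (ξ N0 γ δ d_b d_z c h_b h_z h_m β Zs : ℝ)
    (hξ : 0 < ξ) (hN0 : 0 < N0) (hγ : 0 < γ) (hδ : 0 < δ)
    (hdb : 0 < d_b) (hdz : 0 < d_z) (hc : 0 < c)
    (hhb : 0 < h_b) (hhz : 0 < h_z) (hhm : 0 < h_m) (hβ : 0 < β) (hZs : 0 < Zs)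
    (f : ℝ → ℝ) (R0 : ℝ)
    (hf : f = fun σ => ((d_b + c * σ * Zs / h_m) * (γ + δ) / (ξ * N0) - β / h_b) *
        (h_m * h_z * d_z) / (σ * Zs))
    (hR0 : R0 = ξ * N0 * β / (d_b * (γ + δ) * h_b)) :
    (∀ σ > (0 : ℝ), deriv f σ =
        h_m * h_z * d_z / (h_b * σ ^ 2 * Zs) * ((γ + δ) * h_b * d_b / (ξ * N0)) * (R0 - 1)) ∧
    (R0 < 1 → StrictAntiOn f (Set.Ioi 0)) ∧
    (R0 > 1 → StrictMonoOn f (Set.Ioi 0)) := by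
  have key : ∀ σ > (0 : ℝ), HasDerivAt f
      (h_m * h_z * d_z / (h_b * σ ^ 2 * Zs) * ((γ + δ) * h_b * d_b / (ξ * N0)) * (R0 - 1)) σ := by
    intro σ hσ
    have hσ0 : σ ≠ 0 := ne_of_gt hσ
    have h1 : HasDerivAt (fun σ : ℝ => c * σ * Zs / h_m) (c * Zs / h_m) σ := by
      simpa using (((hasDerivAt_id σ).const_mul c).mul_const Zs).div_const h_m
    have hu : HasDerivAt
        (fun σ : ℝ => ((d_b + c * σ * Zs / h_m) * (γ + δ) / (ξ * N0) - β / h_b) *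
          (h_m * h_z * d_z))
        ((c * Zs / h_m) * (γ + δ) / (ξ * N0) * (h_m * h_z * d_z)) σ :=
      ((((h1.const_add d_b).mul_const (γ + δ)).div_const (ξ * N0)).sub_const
        (β / h_b)).mul_const (h_m * h_z * d_z)
    have hv : HasDerivAt (fun σ : ℝ => σ * Zs) Zs σ := by
      simpa using (hasDerivAt_id σ).mul_const Zs
    have hd := hu.div hv (mul_ne_zero hσ0 hZs.ne')
    rw [hf, hR0]
    refine hd.congr_deriv ?_
    field_simp
    ring
  refine ⟨fun σ hσ => (key σ hσ).deriv, ?_, ?_⟩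
  · intro hR
    apply strictAntiOn_of_deriv_neg (convex_Ioi 0)
    · exact fun x hx => ((key x hx).differentiableAt).continuousAt.continuousWithinAt
    · intro x hx
      rw [interior_Ioi] at hx
      rw [(key x hx).deriv]
      have hx0 : (0:ℝ) < x := hx
      apply mul_neg_of_pos_of_neg
      · positivity
      · linarith
  · intro hR
    apply strictMonoOn_of_deriv_pos (convex_Ioi 0)
    · exact fun x hx => ((key x hx).differentiableAt).continuousAt.continuousWithinAt
    · intro x hx
      rw [interior_Ioi] at hx
      rw [(key x hx).deriv]
      have hx0 : (0:ℝ) < x := hx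
      apply mul_pos
      · positivity
      · linarith
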